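/- Augmented-MDP loss identity (Eq. 12): Let γ ∈ ℝ with γ > 0, let c : ℕ → ℝ be a sequence of costs, let v ∈ ℝ, λ ≥ 0 and ε > 0, and define x : ℕ → ℝ by x 0 = v and x (t+1) = (x t − c t) / γ. Then for every T ∈ ℕ, the discounted loss of the augmented MDP, in which the extra terminal cost (λ/ε) * max 0 (−(x T)) is added at the terminal step, satisfies: (∑_{t=0}^{T−1} γ^t * c t) + γ^T * ((λ/ε) * max 0 (−(x T))) = (∑_{t=0}^{T−1} γ^t * c t) + (λ/ε) * max 0 ((∑_{t=0}^{T−1} γ^t * c t) − v). That is, the augmented loss C' equals C + (λ/ε) * max(0, C − v) where C = ∑_{t=0}^{T−1} γ^t * c t is the original discounted loss. -/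

import Mathlib

/-- Augmented-MDP loss identity (Eq. 12): the discounted loss of the augmented
MDP, with extra terminal cost `(λ/ε) * max 0 (-(x T))`, equals
`C + (λ/ε) * max 0 (C - v)` where `C = ∑_{t<T} γ^t c t`. -/
theorem augmented_mdp_loss_identity (γ : ℝ) (hγ : 0 < γ) (c : ℕ → ℝ)
    (v lam ε : ℝ) (hlam : 0 ≤ lam) (hε : 0 < ε)
    (x : ℕ → ℝ) (hx0 : x 0 = v) (hx : ∀ t, x (t + 1) = (x t - c t) / γ) :
    ∀ T : ℕ,
      (∑ t ∈ Finset.range T, γ ^ t * c t) +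
          γ ^ T * ((lam / ε) * max 0 (-(x T))) =
        (∑ t ∈ Finset.range T, γ ^ t * c t) +
          (lam / ε) * max 0 ((∑ t ∈ Finset.range T, γ ^ t * c t) - v) := by
  have key : ∀ T : ℕ, γ ^ T * x T = v - ∑ t ∈ Finset.range T, γ ^ t * c t := by
    intro T
    induction T with
    | zero => simp [hx0]
    | succ n ih =>
      rw [Finset.sum_range_succ, hx n, pow_succ]
      field_simp
      linear_combination ih
  intro T
  have h1 : γ ^ T * max 0 (-(x T)) = max 0 ((∑ t ∈ Finset.range T, γ ^ t * c t) - v) := by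
    rw [mul_max_of_nonneg _ _ (le_of_lt (pow_pos hγ T)), mul_zero, mul_neg, key T, neg_sub]
  calc (∑ t ∈ Finset.range T, γ ^ t * c t) + γ ^ T * ((lam / ε) * max 0 (-(x T)))
      = (∑ t ∈ Finset.range T, γ ^ t * c t) + (lam / ε) * (γ ^ T * max 0 (-(x T))) := by ring
    _ = _ := by rw [h1]
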